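/- arXiv:2206.06484 — 4 statements merged into one kernel-verified Lean document; each statement's English description precedes it below -/
import Mathlib

section
/- For any measurable m : Ω → [0,1] and v ∈ [0,1], every segmentation s in the class S_{m,v} (segmentations of volume v that vanish λ-a.e. where m < 1 - F_m⁻¹(v) and equal 1 λ-a.e. where m > 1 - F_m⁻¹(v)) attains the supremum of ∫ s·m dλ over all segmentations of volume v, and conversely every maximizer of volume v lies in S_{m,v}. -/
open MeasureTheory Set Filter

noncomputable section

/-- Normalized Lebesgue measure on the unit cube `[0,1]^n`. -/
def cubeMeasure (n : ℕ) : Measure (Fin n → ℝ) :=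
  volume.restrict (Set.univ.pi fun _ => Set.Icc (0:ℝ) 1)

/-- A segmentation: a measurable `{0,1}`-valued function on the cube. -/
def IsSeg {n : ℕ} (s : (Fin n → ℝ) → ℝ) : Prop :=
  Measurable s ∧ ∀ ω, s ω = 0 ∨ s ω = 1

/-- A marginal function: a measurable `[0,1]`-valued function on the cube. -/
def IsMarg {n : ℕ} (m : (Fin n → ℝ) → ℝ) : Prop :=
  Measurable m ∧ ∀ ω, m ω ∈ Set.Icc (0:ℝ) 1

/-- The volume `‖f‖₁ = ∫ f dλ` (for nonnegative `f`). -/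
def vol {n : ℕ} (f : (Fin n → ℝ) → ℝ) : ℝ := ∫ ω, f ω ∂(cubeMeasure n)

/-- `F_m(t) = λ({ω : 1 - m(ω) ≤ t})`. -/
def Fcdf {n : ℕ} (m : (Fin n → ℝ) → ℝ) (t : ℝ) : ℝ :=
  ((cubeMeasure n) {ω | 1 - m ω ≤ t}).toReal

/-- The left limit `F_m(t-) = λ({ω : 1 - m(ω) < t})`. -/
def FcdfMinus {n : ℕ} (m : (Fin n → ℝ) → ℝ) (t : ℝ) : ℝ :=
  ((cubeMeasure n) {ω | 1 - m ω < t}).toReal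

/-- The generalized inverse (quantile function) `F_m⁻¹(v) = inf{t ∈ [0,1] : F_m(t) ≥ v}`. -/
def Finv {n : ℕ} (m : (Fin n → ℝ) → ℝ) (v : ℝ) : ℝ :=
  sInf {t | t ∈ Set.Icc (0:ℝ) 1 ∧ v ≤ Fcdf m t}

/-- The class `S_{m,v}`. -/
def Smv {n : ℕ} (m : (Fin n → ℝ) → ℝ) (v : ℝ) (s : (Fin n → ℝ) → ℝ) : Prop :=
  IsSeg s ∧ vol s = v ∧
    (∫ ω in {ω | m ω < 1 - Finv m v}, s ω ∂(cubeMeasure n)) = 0 ∧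
    (∫ ω in {ω | m ω > 1 - Finv m v}, (1 - s ω) ∂(cubeMeasure n)) = 0

instance cubeProb (n : ℕ) : IsProbabilityMeasure (cubeMeasure n) := by
  constructor
  rw [cubeMeasure, Measure.restrict_apply_univ, volume_pi_pi]
  simp [Real.volume_Icc]

lemma cube_slab_le {n : ℕ} (i : Fin n) (t t' : ℝ) :
    cubeMeasure n {ω | t < ω i ∧ ω i ≤ t'} ≤ ENNReal.ofReal (t' - t) := by
  rw [cubeMeasure, Measure.restrict_apply']
  · calc volume ({ω : Fin n → ℝ | t < ω i ∧ ω i ≤ t'} ∩ Set.univ.pi fun _ => Icc (0:ℝ) 1)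
        ≤ volume (Set.univ.pi (Function.update (fun _ : Fin n => Icc (0:ℝ) 1) i (Icc t t'))) := by
          apply measure_mono
          rintro ω ⟨⟨h1, h2⟩, hcube⟩ j _
          rcases eq_or_ne j i with rfl | hj
          · simp [Function.update_self, le_of_lt h1, h2]
          · simpa [Function.update_of_ne hj] using hcube j (mem_univ j)
      _ = ENNReal.ofReal (t' - t) := by
          rw [volume_pi_pi]
          rw [Fintype.prod_eq_single i (fun j hj => by
            rw [Function.update_of_ne hj]; simp [Real.volume_Icc])]
          rw [Function.update_self, Real.volume_Icc]
  · exact MeasurableSet.univ_pi fun _ => measurableSet_Icc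

lemma cube_coord_nonneg {n : ℕ} (i : Fin n) : cubeMeasure n {ω | ω i < 0} = 0 := by
  rw [cubeMeasure, Measure.restrict_apply']
  · have : {ω : Fin n → ℝ | ω i < 0} ∩ (Set.univ.pi fun _ => Icc (0:ℝ) 1) = ∅ := by
      ext ω; simp only [mem_inter_iff, mem_setOf_eq, mem_empty_iff_false, iff_false, not_and]
      intro h hcube
      exact absurd (hcube i (mem_univ i)).1 (not_le.mpr h)
    rw [this, measure_empty]
  · exact MeasurableSet.univ_pi fun _ => measurableSet_Icc

lemma cube_coord_le_one {n : ℕ} (i : Fin n) : cubeMeasure n {ω | 1 < ω i} = 0 := by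
  rw [cubeMeasure, Measure.restrict_apply']
  · have : {ω : Fin n → ℝ | 1 < ω i} ∩ (Set.univ.pi fun _ => Icc (0:ℝ) 1) = ∅ := by
      ext ω; simp only [mem_inter_iff, mem_setOf_eq, mem_empty_iff_false, iff_false, not_and]
      intro h hcube
      exact absurd (hcube i (mem_univ i)).2 (not_le.mpr h)
    rw [this, measure_empty]
  · exact MeasurableSet.univ_pi fun _ => measurableSet_Icc

/-- An exact-measure subset exists (disjointness handles the degenerate case `n = 0`). -/
lemma exists_exact_subset {n : ℕ} {A C : Set (Fin n → ℝ)}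
    (hA : MeasurableSet A) (hC : MeasurableSet C) (hd : Disjoint A C)
    (h1 : 0 < cubeMeasure n A) (h2 : cubeMeasure n A ≤ cubeMeasure n C) :
    ∃ C₁, C₁ ⊆ C ∧ MeasurableSet C₁ ∧ cubeMeasure n C₁ = cubeMeasure n A := by
  rcases Nat.eq_zero_or_pos n with rfl | hn
  · exfalso
    have h2' : 0 < cubeMeasure 0 C := lt_of_lt_of_le h1 h2
    obtain ⟨a, ha⟩ := nonempty_of_measure_ne_zero h1.ne'
    obtain ⟨c, hc⟩ := nonempty_of_measure_ne_zero h2'.ne'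
    have : a = c := Subsingleton.elim a c
    exact (disjoint_left.mp hd ha) (this ▸ hc)
  · set i : Fin n := ⟨0, hn⟩
    set μ := cubeMeasure n with hμ
    set g : ℝ → ℝ := fun t => (μ (C ∩ {ω | ω i ≤ t})).toReal with hg
    have hmeas : ∀ t : ℝ, MeasurableSet (C ∩ {ω | ω i ≤ t}) := fun t =>
      hC.inter (measurableSet_le (measurable_pi_apply i) measurable_const)
    have hfin : ∀ S : Set (Fin n → ℝ), μ S ≠ ⊤ := fun S => measure_ne_top μ S
    have hlip : LipschitzWith 1 g := by
      apply LipschitzWith.of_dist_le_mul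
      intro t' t
      wlog h : t ≤ t' generalizing t t'
      · rw [dist_comm, dist_comm t' t]; exact this t t' (le_of_not_ge h)
      have split : μ (C ∩ {ω | ω i ≤ t'})
          = μ (C ∩ {ω | ω i ≤ t}) + μ (C ∩ {ω | t < ω i ∧ ω i ≤ t'}) := by
        rw [← measure_union]
        · congr 1
          ext ω
          simp only [mem_inter_iff, mem_union, mem_setOf_eq]
          constructor
          · rintro ⟨hc, hle⟩
            rcases le_or_gt (ω i) t with h' | h'
            · exact Or.inl ⟨hc, h'⟩
            · exact Or.inr ⟨hc, h', hle⟩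
          · rintro (⟨hc, h'⟩ | ⟨hc, h', hle⟩)
            · exact ⟨hc, h'.trans h⟩
            · exact ⟨hc, hle⟩
        · exact Set.disjoint_left.mpr
            (by rintro ω ⟨_, hle⟩ ⟨_, hlt, _⟩; exact absurd hle (not_le.mpr hlt))
        · exact hC.inter ((measurableSet_lt measurable_const (measurable_pi_apply i)).inter
            (measurableSet_le (measurable_pi_apply i) measurable_const))
      have gmono : g t ≤ g t' := by
        apply ENNReal.toReal_le_toReal (hfin _) (hfin _) |>.mpr
        exact measure_mono (inter_subset_inter_right _ (fun ω hω => le_trans hω h))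
      have hdiff : g t' - g t ≤ t' - t := by
        have hb : μ (C ∩ {ω | t < ω i ∧ ω i ≤ t'}) ≤ ENNReal.ofReal (t' - t) :=
          le_trans (measure_mono inter_subset_right) (cube_slab_le i t t')
        have h3 : g t' = g t + (μ (C ∩ {ω | t < ω i ∧ ω i ≤ t'})).toReal := by
          rw [hg]; simp only
          rw [split, ENNReal.toReal_add (hfin _) (hfin _)]
        rw [h3]
        have hb' := ENNReal.toReal_le_toReal (hfin _) ENNReal.ofReal_ne_top |>.mpr hb
        rw [ENNReal.toReal_ofReal (by linarith)] at hb'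
        linarith
      rw [NNReal.coe_one, one_mul, Real.dist_eq, Real.dist_eq,
        abs_of_nonneg (sub_nonneg.mpr gmono), abs_of_nonneg (sub_nonneg.mpr h)]
      exact hdiff
    have hg0 : g (-1) = 0 := by
      rw [hg]; simp only
      have h0 : μ (C ∩ {ω | ω i ≤ -1}) = 0 := by
        apply measure_mono_null _ (cube_coord_nonneg i)
        intro ω hω
        simp only [mem_inter_iff, mem_setOf_eq] at hω ⊢
        linarith [hω.2]
      simp [h0]
    have hg1 : g 1 = (μ C).toReal := by
      rw [hg]; simp only
      congr 1
      apply le_antisymm (measure_mono inter_subset_left)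
      calc μ C ≤ μ ((C ∩ {ω | ω i ≤ 1}) ∪ {ω | 1 < ω i}) := by
            apply measure_mono
            intro ω hc
            rcases le_or_gt (ω i) 1 with h' | h'
            · exact Or.inl ⟨hc, h'⟩
            · exact Or.inr h'
        _ ≤ μ (C ∩ {ω | ω i ≤ 1}) + μ {ω | 1 < ω i} := measure_union_le _ _
        _ = μ (C ∩ {ω | ω i ≤ 1}) := by rw [hμ, cube_coord_le_one, add_zero]
    have hr : (μ A).toReal ∈ Icc (g (-1)) (g 1) := by
      rw [hg0, hg1]
      exact ⟨ENNReal.toReal_nonneg, ENNReal.toReal_le_toReal (hfin _) (hfin _) |>.mpr h2⟩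
    obtain ⟨t, _, hgt⟩ :=
      intermediate_value_Icc (by norm_num : (-1:ℝ) ≤ 1) hlip.continuous.continuousOn hr
    exact ⟨C ∩ {ω | ω i ≤ t}, inter_subset_left, hmeas t,
      (ENNReal.toReal_eq_toReal_iff' (hfin _) (hfin _)).mp hgt⟩

section Quantile
variable {n : ℕ} {m : (Fin n → ℝ) → ℝ} {v : ℝ}

lemma Tset_one (hm : IsMarg m) (hv : v ∈ Set.Icc (0:ℝ) 1) :
    (1:ℝ) ∈ {t | t ∈ Set.Icc (0:ℝ) 1 ∧ v ≤ Fcdf m t} := by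
  refine ⟨⟨zero_le_one, le_refl 1⟩, ?_⟩
  have : {ω : Fin n → ℝ | 1 - m ω ≤ 1} = univ := by
    ext ω; simp only [mem_setOf_eq, mem_univ, iff_true]
    linarith [(hm.2 ω).1]
  rw [Fcdf, this, measure_univ]
  simpa using hv.2

lemma Tset_bdd : BddBelow {t | t ∈ Set.Icc (0:ℝ) 1 ∧ v ≤ Fcdf m t} :=
  ⟨0, fun t ht => ht.1.1⟩

lemma Finv_mem (hm : IsMarg m) (hv : v ∈ Set.Icc (0:ℝ) 1) :
    Finv m v ∈ Set.Icc (0:ℝ) 1 := by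
  constructor
  · exact le_csInf ⟨1, Tset_one hm hv⟩ fun t ht => ht.1.1
  · exact csInf_le Tset_bdd (Tset_one hm hv)

lemma measure_ge_quantile (hm : IsMarg m) (hv : v ∈ Set.Icc (0:ℝ) 1) :
    ENNReal.ofReal v ≤ cubeMeasure n {ω | 1 - m ω ≤ Finv m v} := by
  set μ := cubeMeasure n
  set τ := Finv m v with hτ
  set S : ℕ → Set (Fin n → ℝ) := fun k => {ω | 1 - m ω ≤ τ + 1/(k+1)} with hS
  have hmeasS : ∀ k, MeasurableSet (S k) := fun k =>
    measurableSet_le (measurable_const.sub hm.1) measurable_const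
  have hanti : Antitone S := by
    intro k l hkl ω hω
    simp only [hS, mem_setOf_eq] at hω ⊢
    have h1 : 1/((l:ℝ)+1) ≤ 1/((k:ℝ)+1) := by
      apply one_div_le_one_div_of_le (by positivity)
      have : (k:ℝ) ≤ l := Nat.cast_le.mpr hkl
      linarith
    linarith
  have hiInter : ⋂ k, S k = {ω | 1 - m ω ≤ τ} := by
    ext ω
    simp only [mem_iInter, hS, mem_setOf_eq]
    constructor
    · intro h
      by_contra hc
      push_neg at hc
      obtain ⟨k, hk⟩ := exists_nat_one_div_lt (sub_pos.mpr hc)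
      linarith [h k]
    · intro h k
      have : (0:ℝ) < 1/(k+1) := by positivity
      linarith
  have htend : Tendsto (fun k => μ (S k)) atTop (nhds (μ (⋂ k, S k))) :=
    tendsto_measure_iInter_atTop (fun k => (hmeasS k).nullMeasurableSet) hanti ⟨0, measure_ne_top _ _⟩
  rw [hiInter] at htend
  apply ge_of_tendsto htend
  apply Eventually.of_forall
  intro k
  have hpos : (0:ℝ) < 1/(k+1) := by positivity
  obtain ⟨t, htT, htlt⟩ : ∃ t ∈ {t | t ∈ Set.Icc (0:ℝ) 1 ∧ v ≤ Fcdf m t}, t < τ + 1/(k+1) := by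
    apply exists_lt_of_csInf_lt ⟨1, Tset_one hm hv⟩
    show sInf _ < τ + 1/(k+1)
    rw [← Finv, ← hτ]; linarith
  calc ENNReal.ofReal v ≤ ENNReal.ofReal (Fcdf m t) := ENNReal.ofReal_le_ofReal htT.2
    _ = μ {ω | 1 - m ω ≤ t} := by rw [Fcdf, ENNReal.ofReal_toReal (measure_ne_top _ _)]
    _ ≤ μ (S k) := measure_mono fun ω hω => le_trans hω (le_of_lt htlt)

lemma measure_gt_quantile (hm : IsMarg m) (hv : v ∈ Set.Icc (0:ℝ) 1) :
    cubeMeasure n {ω | 1 - m ω < Finv m v} ≤ ENNReal.ofReal v := by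
  set μ := cubeMeasure n
  set τ := Finv m v with hτ
  have hbound : ∀ t : ℝ, t < τ → μ {ω | 1 - m ω ≤ t} ≤ ENNReal.ofReal v := by
    intro t ht
    rcases lt_or_ge t 0 with h0 | h0
    · have : {ω : Fin n → ℝ | 1 - m ω ≤ t} = ∅ := by
        ext ω; simp only [mem_setOf_eq, mem_empty_iff_false, iff_false, not_le]
        have := (hm.2 ω).2; linarith
      rw [this, measure_empty]; exact zero_le
    · have ht1 : t ≤ 1 := le_trans (le_of_lt ht) (Finv_mem hm hv).2
      have hnotT : t ∉ {t | t ∈ Set.Icc (0:ℝ) 1 ∧ v ≤ Fcdf m t} :=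
        notMem_of_lt_csInf ht Tset_bdd
      have : Fcdf m t < v := by
        by_contra hc
        exact hnotT ⟨⟨h0, ht1⟩, le_of_not_gt hc⟩
      calc μ {ω | 1 - m ω ≤ t} = ENNReal.ofReal (Fcdf m t) := by
            rw [Fcdf, ENNReal.ofReal_toReal (measure_ne_top _ _)]
        _ ≤ ENNReal.ofReal v := ENNReal.ofReal_le_ofReal (le_of_lt this)
  set U : ℕ → Set (Fin n → ℝ) := fun k => {ω | 1 - m ω ≤ τ - 1/(k+1)} with hU
  have hmono : Monotone U := by
    intro k l hkl ω hω
    simp only [hU, mem_setOf_eq] at hω ⊢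
    have h1 : 1/((l:ℝ)+1) ≤ 1/((k:ℝ)+1) := by
      apply one_div_le_one_div_of_le (by positivity)
      have : (k:ℝ) ≤ l := Nat.cast_le.mpr hkl
      linarith
    linarith
  have hiUnion : ⋃ k, U k = {ω | 1 - m ω < τ} := by
    ext ω
    simp only [mem_iUnion, hU, mem_setOf_eq]
    constructor
    · rintro ⟨k, hk⟩
      have : (0:ℝ) < 1/(k+1) := by positivity
      linarith
    · intro h
      obtain ⟨k, hk⟩ := exists_nat_one_div_lt (sub_pos.mpr h)
      exact ⟨k, by linarith⟩
  have htend : Tendsto (fun k => μ (U k)) atTop (nhds (μ (⋃ k, U k))) :=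
    tendsto_measure_iUnion_atTop hmono
  rw [hiUnion] at htend
  apply le_of_tendsto htend
  apply Eventually.of_forall
  intro k
  have hpos : (0:ℝ) < 1/(k+1) := by positivity
  exact hbound _ (by linarith)

end Quantile

section Seg
variable {n : ℕ} {s : (Fin n → ℝ) → ℝ}

lemma seg_measurableSet (hs : IsSeg s) : MeasurableSet {ω | s ω = 1} :=
  hs.1 (measurableSet_singleton 1)

lemma seg_indicator (hs : IsSeg s) :
    s = ({ω | s ω = 1}).indicator (fun _ => (1:ℝ)) := by
  funext ω
  rcases hs.2 ω with h | h
  · have : ω ∉ {ω | s ω = 1} := by simp [h]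
    rw [indicator_of_notMem this, h]
  · have : ω ∈ {ω | s ω = 1} := h
    rw [indicator_of_mem this, h]

lemma seg_setIntegral (hs : IsSeg s) (T : Set (Fin n → ℝ)) :
    ∫ ω in T, s ω ∂(cubeMeasure n) = ((cubeMeasure n) ({ω | s ω = 1} ∩ T)).toReal := by
  conv_lhs => rw [seg_indicator hs]
  rw [setIntegral_indicator (seg_measurableSet hs), setIntegral_const, inter_comm]
  simp [Measure.real]

lemma seg_vol (hs : IsSeg s) :
    vol s = ((cubeMeasure n) {ω | s ω = 1}).toReal := by
  rw [vol, ← setIntegral_univ, seg_setIntegral hs, inter_univ]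

lemma seg_setIntegral_zero_iff (hs : IsSeg s) (T : Set (Fin n → ℝ)) :
    (∫ ω in T, s ω ∂(cubeMeasure n)) = 0 ↔ (cubeMeasure n) ({ω | s ω = 1} ∩ T) = 0 := by
  rw [seg_setIntegral hs]
  simp [ENNReal.toReal_eq_zero_iff, measure_ne_top]

lemma integrable_bdd {f : (Fin n → ℝ) → ℝ} (hf : Measurable f) (C : ℝ)
    (h : ∀ ω, ‖f ω‖ ≤ C) : Integrable f (cubeMeasure n) :=
  (integrable_const C).mono' hf.aestronglyMeasurable (Eventually.of_forall h)

lemma seg_mul_integrable {m : (Fin n → ℝ) → ℝ} (hm : IsMarg m) (hs : IsSeg s) :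
    Integrable (fun ω => s ω * m ω) (cubeMeasure n) := by
  apply integrable_bdd (hs.1.mul hm.1) 1
  intro ω
  rcases hs.2 ω with h | h <;>
    · rw [Real.norm_eq_abs, Pi.mul_apply, abs_mul, h]
      simp [abs_of_nonneg (hm.2 ω).1, (hm.2 ω).2]

lemma marg_integrable {m : (Fin n → ℝ) → ℝ} (hm : IsMarg m) :
    Integrable m (cubeMeasure n) := by
  apply integrable_bdd hm.1 1
  intro ω
  rw [Real.norm_eq_abs, abs_of_nonneg (hm.2 ω).1]
  exact (hm.2 ω).2

lemma seg_integrable (hs : IsSeg s) : Integrable s (cubeMeasure n) := by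
  apply integrable_bdd hs.1 1
  intro ω
  rcases hs.2 ω with h | h <;> simp [h]

/-- Swapping the mass of `s` from `P` (where `s = 1`) to `Q` (where `s = 0`) with
`μ P = μ Q` yields a segmentation of the same volume whose objective changes by
`∫_Q m - ∫_P m`. -/
lemma swap_seg {m : (Fin n → ℝ) → ℝ} (hm : IsMarg m) (hs : IsSeg s)
    {P Q : Set (Fin n → ℝ)} (hP : MeasurableSet P) (hQ : MeasurableSet Q)
    (hPE : ∀ ω ∈ P, s ω = 1) (hQE : ∀ ω ∈ Q, s ω = 0)
    (hμ : cubeMeasure n P = cubeMeasure n Q) :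
    ∃ s', IsSeg s' ∧ vol s' = vol s ∧
      ∫ ω, s' ω * m ω ∂(cubeMeasure n) = (∫ ω, s ω * m ω ∂(cubeMeasure n))
        - (∫ ω in P, m ω ∂(cubeMeasure n)) + (∫ ω in Q, m ω ∂(cubeMeasure n)) := by
  classical
  set μ := cubeMeasure n
  set E := {ω | s ω = 1} with hE
  have hEmeas : MeasurableSet E := seg_measurableSet hs
  have hPQ : Disjoint P Q := by
    rw [disjoint_left]
    intro ω hp hq
    have := hPE ω hp
    have := hQE ω hq
    linarith
  have hPsub : P ⊆ E := fun ω hω => hPE ω hω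
  have hQE' : Disjoint Q E := by
    rw [disjoint_left]
    intro ω hq he
    have h0 := hQE ω hq
    have h1 : s ω = 1 := he
    linarith
  set N := (E \ P) ∪ Q with hN
  have hNmeas : MeasurableSet N := (hEmeas.diff hP).union hQ
  set s' : (Fin n → ℝ) → ℝ := N.indicator (fun _ => 1) with hs'
  have hseg' : IsSeg s' := by
    constructor
    · exact (measurable_const.indicator hNmeas)
    · intro ω
      by_cases h : ω ∈ N
      · right; rw [hs', indicator_of_mem h]
      · left; rw [hs', indicator_of_notMem h]
  have hs'E : {ω | s' ω = 1} = N := by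
    ext ω
    by_cases h : ω ∈ N
    · simp [hs', indicator_of_mem h, h]
    · simp [hs', indicator_of_notMem h, h]
  have hvol' : vol s' = vol s := by
    rw [seg_vol hseg', seg_vol hs, hs'E, ← hE]
    congr 1
    have hdisj : Disjoint (E \ P) Q := hQE'.symm.mono_left diff_subset
    rw [hN, measure_union hdisj hQ, ← hμ]
    have h := measure_diff_add_inter (μ := μ) E hP
    rw [inter_eq_self_of_subset_right hPsub] at h
    exact h
  refine ⟨s', hseg', hvol', ?_⟩
  have hptwise : ∀ ω, s' ω * m ω
      = s ω * m ω - P.indicator m ω + Q.indicator m ω := by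
    intro ω
    by_cases hp : ω ∈ P
    · have hq : ω ∉ Q := disjoint_left.mp hPQ hp
      have hin : ω ∉ N := by
        rw [hN]
        rintro (⟨_, h⟩ | h)
        · exact h hp
        · exact hq h
      rw [hs', indicator_of_notMem hin, indicator_of_mem hp, indicator_of_notMem hq,
        hPE ω hp]
      ring
    · by_cases hq : ω ∈ Q
      · have hin : ω ∈ N := Or.inr hq
        rw [hs', indicator_of_mem hin, indicator_of_notMem hp, indicator_of_mem hq,
          hQE ω hq]
        ring
      · rw [indicator_of_notMem hp, indicator_of_notMem hq]
        rcases hs.2 ω with h0 | h1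
        · have hin : ω ∉ N := by
            rw [hN]
            rintro (⟨h, _⟩ | h)
            · have : s ω = 1 := h
              linarith
            · exact hq h
          rw [hs', indicator_of_notMem hin, h0]
          ring
        · have hin : ω ∈ N := Or.inl ⟨h1, hp⟩
          rw [hs', indicator_of_mem hin, h1]
          ring
  have hIsm : Integrable (fun ω => s ω * m ω) μ := seg_mul_integrable hm hs
  have hIP : Integrable (P.indicator m) μ := by
    apply integrable_bdd (hm.1.indicator hP) 1
    intro ω
    by_cases h : ω ∈ P
    · rw [indicator_of_mem h, Real.norm_eq_abs, abs_of_nonneg (hm.2 ω).1]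
      exact (hm.2 ω).2
    · simp [indicator_of_notMem h]
  have hIQ : Integrable (Q.indicator m) μ := by
    apply integrable_bdd (hm.1.indicator hQ) 1
    intro ω
    by_cases h : ω ∈ Q
    · rw [indicator_of_mem h, Real.norm_eq_abs, abs_of_nonneg (hm.2 ω).1]
      exact (hm.2 ω).2
    · simp [indicator_of_notMem h]
  calc ∫ ω, s' ω * m ω ∂μ
      = ∫ ω, (s ω * m ω - P.indicator m ω + Q.indicator m ω) ∂μ := by
        congr 1; funext ω; exact hptwise ω
    _ = (∫ ω, s ω * m ω ∂μ) - (∫ ω, P.indicator m ω ∂μ) + (∫ ω, Q.indicator m ω ∂μ) := by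
        have h1 := integral_add (μ := μ) (hIsm.sub hIP) hIQ
        have h2 := integral_sub (μ := μ) hIsm hIP
        simp only [Pi.add_apply, Pi.sub_apply] at h1 h2
        rw [h1, h2]
    _ = (∫ ω, s ω * m ω ∂μ) - (∫ ω in P, m ω ∂μ) + (∫ ω in Q, m ω ∂μ) := by
        rw [integral_indicator hP, integral_indicator hQ]

end Seg

theorem stmt3 {n : ℕ} {m : (Fin n → ℝ) → ℝ} (hm : IsMarg m)
    {v : ℝ} (hv : v ∈ Set.Icc (0:ℝ) 1)
    {s : (Fin n → ℝ) → ℝ} (hs : IsSeg s) (hvol : vol s = v) :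
    Smv m v s ↔
      ∀ s', IsSeg s' → vol s' = v →
        (∫ ω, s' ω * m ω ∂(cubeMeasure n)) ≤ ∫ ω, s ω * m ω ∂(cubeMeasure n) := by
  classical
  set μ := cubeMeasure n with hμdef
  set τ := Finv m v with hτ
  set c : ℝ := 1 - τ with hc
  set E : Set (Fin n → ℝ) := {ω | s ω = 1} with hEdef
  have hEmeas : MeasurableSet E := seg_measurableSet hs
  set GE : Set (Fin n → ℝ) := {ω | 1 - m ω ≤ τ} with hGEdef
  set GT : Set (Fin n → ℝ) := {ω | 1 - m ω < τ} with hGTdef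
  have hGEmeas : MeasurableSet GE := measurableSet_le (measurable_const.sub hm.1) measurable_const
  have hGTmeas : MeasurableSet GT := measurableSet_lt (measurable_const.sub hm.1) measurable_const
  have hsetlt : {ω | m ω < c} = GEᶜ := by
    ext ω; simp only [hGEdef, mem_compl_iff, mem_setOf_eq, not_le, hc]
    constructor <;> intro <;> linarith
  have hsetgt : {ω | m ω > c} = GT := by
    ext ω; simp only [hGTdef, mem_setOf_eq, hc, gt_iff_lt]
    constructor <;> intro <;> linarith
  have hEv : μ E = ENNReal.ofReal v := by
    have h1 : (μ E).toReal = v := by rw [← seg_vol hs, hvol]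
    rw [← ENNReal.ofReal_toReal (measure_ne_top μ E), h1]
  have hGE : ENNReal.ofReal v ≤ μ GE := measure_ge_quantile hm hv
  have hGT : μ GT ≤ ENNReal.ofReal v := measure_gt_quantile hm hv
  set A : Set (Fin n → ℝ) := E ∩ GEᶜ with hAdef
  set D : Set (Fin n → ℝ) := GT \ E with hDdef
  have hAmeas : MeasurableSet A := hEmeas.inter hGEmeas.compl
  have hDmeas : MeasurableSet D := hGTmeas.diff hEmeas
  -- characterizations of the two integral conditions
  have hA_iff : (∫ ω in {ω | m ω < 1 - Finv m v}, s ω ∂μ) = 0 ↔ μ A = 0 := by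
    have : {ω | m ω < 1 - Finv m v} = {ω | m ω < c} := by rw [hc, hτ]
    rw [this, seg_setIntegral_zero_iff hs, hsetlt]
  have hs2 : IsSeg (fun ω => 1 - s ω) := by
    refine ⟨measurable_const.sub hs.1, fun ω => ?_⟩
    rcases hs.2 ω with h | h
    · right; simp [h]
    · left; simp [h]
  have hD_iff : (∫ ω in {ω | m ω > 1 - Finv m v}, (1 - s ω) ∂μ) = 0 ↔ μ D = 0 := by
    have hset : {ω | m ω > 1 - Finv m v} = {ω | m ω > c} := by rw [hc, hτ]
    rw [hset, seg_setIntegral_zero_iff hs2]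
    have : {ω | 1 - s ω = 1} ∩ {ω | m ω > c} = D := by
      rw [hsetgt, hDdef]
      ext ω
      simp only [mem_inter_iff, mem_setOf_eq, mem_diff, hEdef]
      constructor
      · rintro ⟨h1, h2⟩
        refine ⟨h2, fun h3 => ?_⟩
        rw [h3] at h1; norm_num at h1
      · rintro ⟨h2, h3⟩
        refine ⟨?_, h2⟩
        rcases hs.2 ω with h | h
        · rw [h]; ring
        · exact absurd h h3
    rw [this]
  constructor
  · rintro ⟨_, _, h3, h4⟩ s' hs' hvol'
    have hA : μ A = 0 := hA_iff.mp h3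
    have hD : μ D = 0 := hD_iff.mp h4
    have hae : ∀ᵐ ω ∂μ, ω ∉ A ∪ D :=
      measure_eq_zero_iff_ae_notMem.mp (measure_union_null hA hD)
    have key : ∀ᵐ ω ∂μ, 0 ≤ (s ω - s' ω) * (m ω - c) := by
      filter_upwards [hae] with ω hω
      rw [mem_union, not_or] at hω
      obtain ⟨h1, h2⟩ := hω
      rcases lt_trichotomy (m ω) c with hlt | heq | hgt
      · have hge : ω ∈ GEᶜ := by
          simp only [hGEdef, mem_compl_iff, mem_setOf_eq, not_le]
          rw [hc] at hlt; linarith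
        have hs0 : s ω = 0 := by
          rcases hs.2 ω with h | h
          · exact h
          · exact absurd ⟨h, hge⟩ h1
        rcases hs'.2 ω with h' | h' <;> rw [hs0, h'] <;> nlinarith
      · rw [heq]; ring_nf; exact le_refl 0
      · have hgtmem : ω ∈ GT := by
          simp only [hGTdef, mem_setOf_eq]
          rw [hc] at hgt; linarith
        have hs1 : s ω = 1 := by
          rcases hs.2 ω with h | h
          · exact absurd ⟨hgtmem, fun hE' => by rw [show s ω = 1 from hE'] at h; norm_num at h⟩ h2
          · exact h
        rcases hs'.2 ω with h' | h' <;> rw [hs1, h'] <;> nlinarith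
    have hI : 0 ≤ ∫ ω, (s ω - s' ω) * (m ω - c) ∂μ := integral_nonneg_of_ae key
    have hIsm : Integrable (fun ω => s ω * m ω) μ := seg_mul_integrable hm hs
    have hIs'm : Integrable (fun ω => s' ω * m ω) μ := seg_mul_integrable hm hs'
    have hIs : Integrable s μ := seg_integrable hs
    have hIs' : Integrable s' μ := seg_integrable hs'
    have hexp : (fun ω => (s ω - s' ω) * (m ω - c))
        = fun ω => (s ω * m ω - s' ω * m ω) - (c * s ω - c * s' ω) := by
      funext ω; ring
    rw [hexp] at hI
    have e1 := integral_sub (μ := μ) (hIsm.sub hIs'm) ((hIs.const_mul c).sub (hIs'.const_mul c))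
    have e2 := integral_sub (μ := μ) hIsm hIs'm
    have e3 := integral_sub (μ := μ) (hIs.const_mul c) (hIs'.const_mul c)
    have e4 := integral_const_mul (μ := μ) c s
    have e5 := integral_const_mul (μ := μ) c s'
    simp only [Pi.sub_apply] at e1 e2 e3
    rw [e1, e2, e3, e4, e5] at hI
    have hvs : ∫ ω, s ω ∂μ = v := hvol
    have hvs' : ∫ ω, s' ω ∂μ = v := hvol'
    rw [hvs, hvs'] at hI
    linarith
  · intro hmax
    refine ⟨hs, hvol, hA_iff.mpr ?_, hD_iff.mpr ?_⟩
    · by_contra hA0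
      have hApos : 0 < μ A := pos_iff_ne_zero.mpr hA0
      set C : Set (Fin n → ℝ) := GE \ E with hCdef
      have hCmeas : MeasurableSet C := hGEmeas.diff hEmeas
      have count1 : μ (E ∩ GE) + μ A = μ E := by
        rw [hAdef, ← Set.diff_eq]
        exact measure_inter_add_diff E hGEmeas
      have count2 : μ (GE ∩ E) + μ C = μ GE := measure_inter_add_diff GE hEmeas
      have hle : μ A ≤ μ C := by
        have h := calc μ (E ∩ GE) + μ A = μ E := count1
          _ = ENNReal.ofReal v := hEv
          _ ≤ μ GE := hGE
          _ = μ (GE ∩ E) + μ C := count2.symm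
          _ = μ (E ∩ GE) + μ C := by rw [inter_comm]
        exact (ENNReal.add_le_add_iff_left (measure_ne_top _ _)).mp h
      have hdisj : Disjoint A C := by
        rw [disjoint_left]
        rintro ω ⟨hωE, _⟩ ⟨_, hωnE⟩
        exact hωnE hωE
      obtain ⟨C₁, hC₁sub, hC₁meas, hC₁μ⟩ := exists_exact_subset hAmeas hCmeas hdisj hApos hle
      have hPE : ∀ ω ∈ A, s ω = 1 := fun ω hω => hω.1
      have hQE : ∀ ω ∈ C₁, s ω = 0 := by
        intro ω hω
        have hωC := hC₁sub hω
        rcases hs.2 ω with h | h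
        · exact h
        · exact absurd h hωC.2
      obtain ⟨s', hseg', hvol'', hint⟩ := swap_seg hm hs hAmeas hC₁meas hPE hQE hC₁μ.symm
      have hcontra := hmax s' hseg' (by rw [hvol'', hvol])
      -- strict gain
      have hIm : Integrable m μ := marg_integrable hm
      have hCb : (μ C₁).toReal * c ≤ ∫ ω in C₁, m ω ∂μ := by
        have hmono := setIntegral_mono_on (μ := μ) (s := C₁) (f := fun _ => c) (g := m)
          (integrableOn_const (C := c) (measure_lt_top _ _).ne) hIm.integrableOn hC₁meas
          (fun ω hω => by
            have : ω ∈ GE := (hC₁sub hω).1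
            simp only [hGEdef, mem_setOf_eq] at this
            rw [hc]; linarith)
        rwa [setIntegral_const, smul_eq_mul] at hmono
      have hAb : ∫ ω in A, m ω ∂μ < (μ A).toReal * c := by
        have hpos : 0 < ∫ ω in A, (c - m ω) ∂μ := by
          rw [setIntegral_pos_iff_support_of_nonneg_ae]
          · have hsub : A ⊆ Function.support (fun ω => c - m ω) := by
              intro ω hω
              have : m ω < c := by
                have := hω.2
                simp only [hGEdef, mem_compl_iff, mem_setOf_eq, not_le] at this
                rw [hc]; linarith
              simp only [Function.mem_support]
              intro h; rw [sub_eq_zero] at h; linarith [h]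
            rwa [inter_eq_self_of_subset_right hsub]
          · rw [EventuallyLE, ae_restrict_iff' hAmeas]
            apply Eventually.of_forall
            intro ω hω
            have : m ω < c := by
              have := hω.2
              simp only [hGEdef, mem_compl_iff, mem_setOf_eq, not_le] at this
              rw [hc]; linarith
            simp only [Pi.zero_apply]
            linarith
          · exact ((integrable_const c).sub hIm).integrableOn
        have hsplit : ∫ ω in A, (c - m ω) ∂μ
            = (μ A).toReal * c - ∫ ω in A, m ω ∂μ := by
          rw [integral_sub (integrableOn_const (C := c) (measure_lt_top _ _).ne) hIm.integrableOn,
            setIntegral_const, smul_eq_mul, Measure.real]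
        rw [hsplit] at hpos
        linarith
      have hcc : (μ C₁).toReal * c = (μ A).toReal * c := by rw [hC₁μ]
      rw [hint] at hcontra
      linarith [hcontra, hCb, hAb]
    · by_contra hD0
      have hDpos : 0 < μ D := pos_iff_ne_zero.mpr hD0
      set Et : Set (Fin n → ℝ) := E \ GT with hEtdef
      have hEtmeas : MeasurableSet Et := hEmeas.diff hGTmeas
      have count1 : μ (GT ∩ E) + μ D = μ GT := measure_inter_add_diff GT hEmeas
      have count2 : μ (E ∩ GT) + μ Et = μ E := measure_inter_add_diff E hGTmeas
      have hle : μ D ≤ μ Et := by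
        have h := calc μ (GT ∩ E) + μ D = μ GT := count1
          _ ≤ ENNReal.ofReal v := hGT
          _ = μ E := hEv.symm
          _ = μ (E ∩ GT) + μ Et := count2.symm
          _ = μ (GT ∩ E) + μ Et := by rw [inter_comm]
        exact (ENNReal.add_le_add_iff_left (measure_ne_top _ _)).mp h
      have hdisj : Disjoint D Et := by
        rw [disjoint_left]
        rintro ω ⟨_, hωnE⟩ ⟨hωE, _⟩
        exact hωnE hωE
      obtain ⟨E₁, hE₁sub, hE₁meas, hE₁μ⟩ := exists_exact_subset hDmeas hEtmeas hdisj hDpos hle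
      have hPE : ∀ ω ∈ E₁, s ω = 1 := fun ω hω => (hE₁sub hω).1
      have hQE : ∀ ω ∈ D, s ω = 0 := by
        intro ω hω
        rcases hs.2 ω with h | h
        · exact h
        · exact absurd h hω.2
      obtain ⟨s', hseg', hvol'', hint⟩ := swap_seg hm hs hE₁meas hDmeas hPE hQE hE₁μ
      have hcontra := hmax s' hseg' (by rw [hvol'', hvol])
      have hIm : Integrable m μ := marg_integrable hm
      have hEb : ∫ ω in E₁, m ω ∂μ ≤ (μ E₁).toReal * c := by
        have hmono := setIntegral_mono_on (μ := μ) (s := E₁) (f := m) (g := fun _ => c)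
          hIm.integrableOn (integrableOn_const (C := c) (measure_lt_top _ _).ne) hE₁meas
          (fun ω hω => by
            have : ω ∉ GT := (hE₁sub hω).2
            simp only [hGTdef, mem_setOf_eq, not_lt] at this
            rw [hc]; linarith)
        rwa [setIntegral_const, smul_eq_mul] at hmono
      have hDb : (μ D).toReal * c < ∫ ω in D, m ω ∂μ := by
        have hpos : 0 < ∫ ω in D, (m ω - c) ∂μ := by
          rw [setIntegral_pos_iff_support_of_nonneg_ae]
          · have hsub : D ⊆ Function.support (fun ω => m ω - c) := by
              intro ω hω
              have : c < m ω := by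
                have := hω.1
                simp only [hGTdef, mem_setOf_eq] at this
                rw [hc]; linarith
              simp only [Function.mem_support]
              intro h; rw [sub_eq_zero] at h; linarith [h]
            rwa [inter_eq_self_of_subset_right hsub]
          · rw [EventuallyLE, ae_restrict_iff' hDmeas]
            apply Eventually.of_forall
            intro ω hω
            have : c < m ω := by
              have := hω.1
              simp only [hGTdef, mem_setOf_eq] at this
              rw [hc]; linarith
            simp only [Pi.zero_apply]
            linarith
          · exact (hIm.sub (integrable_const c)).integrableOn
        have hsplit : ∫ ω in D, (m ω - c) ∂μ
            = (∫ ω in D, m ω ∂μ) - (μ D).toReal * c := by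
          rw [integral_sub hIm.integrableOn (integrableOn_const (C := c) (measure_lt_top _ _).ne),
            setIntegral_const, smul_eq_mul, Measure.real]
        rw [hsplit] at hpos
        linarith
      have hcc : (μ E₁).toReal * c = (μ D).toReal * c := by rw [hE₁μ]
      rw [hint] at hcontra
      linarith [hcontra, hEb, hDb]
end
end

section
/- For any measurable m : Ω → [0,1], the set of volumes v at which a_m(v) = v + 1 - ‖m‖₁ - 2∫₀^v F_m⁻¹(u) du is maximized equals the interval [F_m(1/2-), F_m(1/2)], where F_m(1/2-) denotes the left limit of F_m at 1/2. -/
open MeasureTheory Set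

noncomputable section

/-- The function `a_m`. -/
def aFun {n : ℕ} (m : (Fin n → ℝ) → ℝ) (v : ℝ) : ℝ :=
  v + 1 - vol m - 2 * ∫ u in (0:ℝ)..v, Finv m u

namespace StmtAux

instance cubeProb (n : ℕ) : IsProbabilityMeasure (cubeMeasure n) := by
  constructor
  rw [cubeMeasure, Measure.restrict_apply_univ, volume_pi_pi]
  simp [Real.volume_Icc]

variable {n : ℕ} {m : (Fin n → ℝ) → ℝ}

lemma Fcdf_mono {s t : ℝ} (hst : s ≤ t) : Fcdf m s ≤ Fcdf m t :=
  ENNReal.toReal_mono (measure_ne_top _ _)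
    (measure_mono fun ω hω => le_trans hω hst)

lemma Fcdf_nonneg {t : ℝ} : 0 ≤ Fcdf m t := ENNReal.toReal_nonneg

lemma Fcdf_le_one {t : ℝ} : Fcdf m t ≤ 1 := by
  have h := prob_le_one (μ := cubeMeasure n) (s := {ω | 1 - m ω ≤ t})
  have h2 := ENNReal.toReal_mono (show (1:ENNReal) ≠ ⊤ by simp) h
  rw [ENNReal.toReal_one] at h2
  exact h2

lemma FcdfMinus_nonneg {t : ℝ} : 0 ≤ FcdfMinus m t := ENNReal.toReal_nonneg

lemma alpha_le_beta : FcdfMinus m (1/2) ≤ Fcdf m (1/2) :=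
  ENNReal.toReal_mono (measure_ne_top _ _) (measure_mono fun ω (hω : 1 - m ω < 1/2) => (hω.le : 1 - m ω ≤ 1/2))

lemma Fcdf_one (hm : IsMarg m) : Fcdf m 1 = 1 := by
  have h : {ω | 1 - m ω ≤ (1:ℝ)} = univ := by
    ext ω
    simp only [mem_setOf_eq, mem_univ, iff_true]
    linarith [(hm.2 ω).1]
  rw [Fcdf, h, measure_univ]
  simp

lemma Finv_le {v t : ℝ} (h0 : 0 ≤ t) (h1 : t ≤ 1) (h : v ≤ Fcdf m t) : Finv m v ≤ t :=
  csInf_le ⟨0, fun s hs => hs.1.1⟩ ⟨⟨h0, h1⟩, h⟩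

lemma Finv_nonneg {v : ℝ} : 0 ≤ Finv m v :=
  Real.sInf_nonneg fun s hs => hs.1.1

lemma S_nonempty (hm : IsMarg m) {v : ℝ} (hv : v ≤ 1) :
    Set.Nonempty {t | t ∈ Icc (0:ℝ) 1 ∧ v ≤ Fcdf m t} :=
  ⟨1, ⟨by norm_num, by rw [Fcdf_one hm]; exact hv⟩⟩

lemma Finv_monoOn (hm : IsMarg m) : MonotoneOn (Finv m) (Iic (1:ℝ)) := by
  intro a _ b hb hab
  exact csInf_le_csInf ⟨0, fun s hs => hs.1.1⟩ (S_nonempty hm hb)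
    (fun t ht => ⟨ht.1, hab.trans ht.2⟩)

lemma Finv_intInt (hm : IsMarg m) {a b : ℝ} (ha : a ∈ Icc (0:ℝ) 1) (hb : b ∈ Icc (0:ℝ) 1) :
    IntervalIntegrable (Finv m) volume a b :=
  ((Finv_monoOn hm).mono ((uIcc_subset_Icc ha hb).trans Icc_subset_Iic_self)).intervalIntegrable

lemma Finv_le_half {u : ℝ} (h : u ≤ Fcdf m (1/2)) : Finv m u ≤ 1/2 :=
  Finv_le (by norm_num) (by norm_num) h

lemma le_Fcdf_half (hm : IsMarg m) {u : ℝ} (hu1 : u ≤ 1) (h : Finv m u ≤ 1/2) :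
    u ≤ Fcdf m (1/2) := by
  have key : ∀ k : ℕ, u ≤ Fcdf m (1/2 + 1/(k+1)) := by
    intro k
    have hpos : (0:ℝ) < 1/((k:ℝ)+1) := by positivity
    have hlt : Finv m u < 1/2 + 1/((k:ℝ)+1) := lt_of_le_of_lt h (by linarith)
    obtain ⟨s, hs, hslt⟩ := exists_lt_of_csInf_lt (S_nonempty hm hu1) hlt
    exact hs.2.trans (Fcdf_mono hslt.le)
  set A : ℕ → Set (Fin n → ℝ) := fun k => {ω | 1 - m ω ≤ 1/2 + 1/((k:ℝ)+1)} with hA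
  have hAm : ∀ k, MeasurableSet (A k) := fun k =>
    measurableSet_le (measurable_const.sub hm.1) measurable_const
  have hanti : Antitone A := by
    intro i j hij ω hω
    simp only [hA, mem_setOf_eq] at *
    have hij' : ((i:ℝ)+1) ≤ ((j:ℝ)+1) := by
      have := (Nat.cast_le (α := ℝ)).2 hij; linarith
    have : (1:ℝ)/((j:ℝ)+1) ≤ 1/((i:ℝ)+1) :=
      one_div_le_one_div_of_le (by positivity) hij'
    linarith
  have hInt : (⋂ k, A k) = {ω | 1 - m ω ≤ 1/2} := by
    ext ω
    simp only [mem_iInter, hA, mem_setOf_eq]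
    constructor
    · intro hall
      by_contra hc
      push_neg at hc
      obtain ⟨k, hk⟩ := exists_nat_one_div_lt (show (0:ℝ) < 1 - m ω - 1/2 by linarith)
      linarith [hall k]
    · intro hle k
      have : (0:ℝ) < 1/((k:ℝ)+1) := by positivity
      linarith
  have hmeas := hanti.measure_iInter (μ := cubeMeasure n)
    (fun k => (hAm k).nullMeasurableSet) ⟨0, measure_ne_top _ _⟩
  rw [hInt] at hmeas
  have hle : ENNReal.ofReal u ≤ (cubeMeasure n) {ω | 1 - m ω ≤ 1/2} := by
    rw [hmeas]
    refine le_iInf fun k => ?_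
    rw [ENNReal.ofReal_le_iff_le_toReal (measure_ne_top _ _)]
    exact key k
  exact (ENNReal.ofReal_le_iff_le_toReal (measure_ne_top _ _)).1 hle

lemma Finv_lt_half (hm : IsMarg m) {u : ℝ} (hu0 : 0 ≤ u) (h : u < FcdfMinus m (1/2)) :
    Finv m u < 1/2 := by
  set B : ℕ → Set (Fin n → ℝ) := fun k => {ω | 1 - m ω ≤ 1/2 - 1/((k:ℝ)+1)} with hB
  have hmono : Monotone B := by
    intro i j hij ω hω
    simp only [hB, mem_setOf_eq] at *
    have hij' : ((i:ℝ)+1) ≤ ((j:ℝ)+1) := by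
      have := (Nat.cast_le (α := ℝ)).2 hij; linarith
    have : (1:ℝ)/((j:ℝ)+1) ≤ 1/((i:ℝ)+1) :=
      one_div_le_one_div_of_le (by positivity) hij'
    linarith
  have hUn : (⋃ k, B k) = {ω | 1 - m ω < 1/2} := by
    ext ω
    simp only [mem_iUnion, hB, mem_setOf_eq]
    constructor
    · rintro ⟨k, hk⟩
      have : (0:ℝ) < 1/((k:ℝ)+1) := by positivity
      linarith
    · intro hlt
      obtain ⟨k, hk⟩ := exists_nat_one_div_lt (show (0:ℝ) < 1/2 - (1 - m ω) by linarith)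
      exact ⟨k, by linarith⟩
  have hmeas := hmono.measure_iUnion (μ := cubeMeasure n)
  rw [hUn] at hmeas
  have h2 : ENNReal.ofReal u < (cubeMeasure n) {ω | 1 - m ω < 1/2} := by
    rw [← ENNReal.ofReal_toReal (measure_ne_top (cubeMeasure n) {ω | 1 - m ω < 1/2})]
    exact ENNReal.ofReal_lt_ofReal_iff_of_nonneg hu0 |>.2 h
  rw [hmeas, lt_iSup_iff] at h2
  obtain ⟨k, hk⟩ := h2
  have hk' : u < Fcdf m (1/2 - 1/((k:ℝ)+1)) := by
    by_contra hcon
    push_neg at hcon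
    have h1 : (cubeMeasure n) (B k) = ENNReal.ofReal (Fcdf m (1/2 - 1/((k:ℝ)+1))) :=
      (ENNReal.ofReal_toReal (measure_ne_top _ _)).symm
    rw [h1] at hk
    exact absurd hk (not_lt.2 (ENNReal.ofReal_le_ofReal hcon))
  set t := max (1/2 - 1/((k:ℝ)+1)) 0 with ht
  have ht0 : 0 ≤ t := le_max_right _ _
  have hpos : (0:ℝ) < 1/((k:ℝ)+1) := by positivity
  have ht1 : t ≤ 1 := by
    apply max_le <;> linarith
  have htlt : t < 1/2 := by
    apply max_lt <;> linarith
  have hut : u ≤ Fcdf m t := hk'.le.trans (Fcdf_mono (le_max_left _ _))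
  exact lt_of_le_of_lt (Finv_le ht0 ht1 hut) htlt

lemma half_le_Finv (hm : IsMarg m) {u : ℝ} (hu1 : u ≤ 1) (h : FcdfMinus m (1/2) < u) :
    1/2 ≤ Finv m u := by
  by_contra hc
  push_neg at hc
  obtain ⟨s, hs, hslt⟩ := exists_lt_of_csInf_lt (S_nonempty hm hu1) hc
  have hsub : Fcdf m s ≤ FcdfMinus m (1/2) :=
    ENNReal.toReal_mono (measure_ne_top _ _)
      (measure_mono fun ω hω => lt_of_le_of_lt hω hslt)
  linarith [hs.2]

lemma aFun_diff (hm : IsMarg m) {v w : ℝ} (hv : v ∈ Icc (0:ℝ) 1) (hw : w ∈ Icc (0:ℝ) 1) :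
    aFun m w - aFun m v = (w - v) - 2 * ∫ u in v..w, Finv m u := by
  have h0 : (0:ℝ) ∈ Icc (0:ℝ) 1 := by norm_num
  have h := intervalIntegral.integral_interval_sub_left
    (Finv_intInt hm h0 hw) (Finv_intInt hm h0 hv)
  simp only [aFun]
  linarith [h]

lemma key_const (hm : IsMarg m) {v : ℝ}
    (hv : v ∈ Icc (FcdfMinus m (1/2)) (Fcdf m (1/2))) :
    ∫ u in Ioc v (Fcdf m (1/2)), Finv m u = (Fcdf m (1/2) - v) / 2 := by
  rw [setIntegral_congr_fun (g := fun _ => (1:ℝ)/2) measurableSet_Ioc ?_]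
  · rw [setIntegral_const, Real.volume_real_Ioc_of_le (by linarith [hv.2])]
    simp [smul_eq_mul]; ring
  · intro u hu
    have h1 : Finv m u ≤ 1/2 := Finv_le_half hu.2
    have h2 : 1/2 ≤ Finv m u :=
      half_le_Finv hm (hu.2.trans Fcdf_le_one) (lt_of_le_of_lt hv.1 hu.1)
    linarith

lemma key_right (hm : IsMarg m) {v : ℝ} (hv : v ∈ Icc (0:ℝ) 1) (h : Fcdf m (1/2) < v) :
    aFun m v < aFun m (Fcdf m (1/2)) := by
  set β := Fcdf m (1/2) with hβdef
  have hβ : β ∈ Icc (0:ℝ) 1 := ⟨Fcdf_nonneg, Fcdf_le_one⟩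
  set mid := (β + v)/2 with hmid
  have hβmid : β < mid := by rw [hmid]; linarith
  have hmidv : mid < v := by rw [hmid]; linarith
  have hmidIcc : mid ∈ Icc (0:ℝ) 1 := ⟨by rw [hmid]; linarith [hβ.1, hv.1], by rw [hmid]; linarith [hβ.2, hv.2]⟩
  have hc : 1/2 < Finv m mid := by
    by_contra hc
    push_neg at hc
    have := le_Fcdf_half hm hmidIcc.2 hc
    linarith
  have hi1 : IntegrableOn (Finv m) (Ioc β mid) volume := (Finv_intInt hm hβ hmidIcc).1
  have hi2 : IntegrableOn (Finv m) (Ioc mid v) volume := (Finv_intInt hm hmidIcc hv).1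
  have hIsum : ∫ u in Ioc β v, Finv m u
      = (∫ u in Ioc β mid, Finv m u) + ∫ u in Ioc mid v, Finv m u := by
    rw [← Ioc_union_Ioc_eq_Ioc hβmid.le hmidv.le]
    exact setIntegral_union (Ioc_disjoint_Ioc_of_le le_rfl) measurableSet_Ioc hi1 hi2
  have hb1 : (mid - β) * (1/2) ≤ ∫ u in Ioc β mid, Finv m u := by
    have hmono := setIntegral_mono_on (μ := volume) (f := fun _ => (1:ℝ)/2) (g := Finv m)
      (integrableOn_const (by rw [Real.volume_Ioc]; exact ENNReal.ofReal_ne_top))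
      hi1 measurableSet_Ioc ?_
    · rw [setIntegral_const, Real.volume_real_Ioc_of_le (by linarith)] at hmono
      simpa [smul_eq_mul] using hmono
    · intro u hu
      by_contra hcon
      push_neg at hcon
      have := le_Fcdf_half hm (hu.2.trans hmidIcc.2) hcon.le
      exact absurd this (not_le.2 hu.1)
  have hb2 : (v - mid) * Finv m mid ≤ ∫ u in Ioc mid v, Finv m u := by
    have hmono := setIntegral_mono_on (μ := volume) (f := fun _ => Finv m mid) (g := Finv m)
      (integrableOn_const (by rw [Real.volume_Ioc]; exact ENNReal.ofReal_ne_top))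
      hi2 measurableSet_Ioc ?_
    · rw [setIntegral_const, Real.volume_real_Ioc_of_le (by linarith)] at hmono
      simpa [smul_eq_mul] using hmono
    · intro u hu
      exact Finv_monoOn hm hmidIcc.2 (hu.2.trans hv.2) hu.1.le
  have hd := aFun_diff hm hβ hv
  rw [intervalIntegral.integral_of_le h.le] at hd
  nlinarith [hd, hIsum, hb1, hb2, hc, hmidv]

lemma key_left (hm : IsMarg m) {v : ℝ} (hv : v ∈ Icc (0:ℝ) 1) (h : v < FcdfMinus m (1/2)) :
    aFun m v < aFun m (Fcdf m (1/2)) := by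
  set α := FcdfMinus m (1/2) with hαdef
  set β := Fcdf m (1/2) with hβdef
  have hαβ : α ≤ β := alpha_le_beta
  have hβ : β ∈ Icc (0:ℝ) 1 := ⟨Fcdf_nonneg, Fcdf_le_one⟩
  set mid := (v + α)/2 with hmid
  have hvmid : v < mid := by rw [hmid]; linarith
  have hmidα : mid < α := by rw [hmid]; linarith
  have hmidβ : mid < β := lt_of_lt_of_le hmidα hαβ
  have hmidIcc : mid ∈ Icc (0:ℝ) 1 := ⟨by rw [hmid]; linarith [hv.1, FcdfMinus_nonneg (m := m) (t := 1/2)],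
    by rw [hmid]; linarith [hv.2, hβ.2]⟩
  have hc : Finv m mid < 1/2 := Finv_lt_half hm hmidIcc.1 hmidα
  have hi1 : IntegrableOn (Finv m) (Ioc v mid) volume := (Finv_intInt hm hv hmidIcc).1
  have hi2 : IntegrableOn (Finv m) (Ioc mid β) volume := (Finv_intInt hm hmidIcc hβ).1
  have hIsum : ∫ u in Ioc v β, Finv m u
      = (∫ u in Ioc v mid, Finv m u) + ∫ u in Ioc mid β, Finv m u := by
    rw [← Ioc_union_Ioc_eq_Ioc hvmid.le hmidβ.le]
    exact setIntegral_union (Ioc_disjoint_Ioc_of_le le_rfl) measurableSet_Ioc hi1 hi2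
  have hb1 : (∫ u in Ioc v mid, Finv m u) ≤ (mid - v) * Finv m mid := by
    have hmono := setIntegral_mono_on (μ := volume) (f := Finv m) (g := fun _ => Finv m mid)
      hi1 (integrableOn_const (by rw [Real.volume_Ioc]; exact ENNReal.ofReal_ne_top))
      measurableSet_Ioc ?_
    · rw [setIntegral_const, Real.volume_real_Ioc_of_le (by linarith)] at hmono
      simpa [smul_eq_mul] using hmono
    · intro u hu
      exact Finv_monoOn hm (hu.2.trans hmidIcc.2) hmidIcc.2 hu.2
  have hb2 : (∫ u in Ioc mid β, Finv m u) ≤ (β - mid) * (1/2) := by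
    have hmono := setIntegral_mono_on (μ := volume) (f := Finv m) (g := fun _ => (1:ℝ)/2)
      hi2 (integrableOn_const (by rw [Real.volume_Ioc]; exact ENNReal.ofReal_ne_top))
      measurableSet_Ioc ?_
    · rw [setIntegral_const, Real.volume_real_Ioc_of_le (by linarith)] at hmono
      simpa [smul_eq_mul] using hmono
    · intro u hu
      exact Finv_le_half hu.2
  have hd := aFun_diff hm hv hβ
  rw [intervalIntegral.integral_of_le (by linarith : v ≤ β)] at hd
  nlinarith [hd, hIsum, hb1, hb2, hc, hvmid]

end StmtAux

open StmtAux in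
theorem stmt5 {n : ℕ} {m : (Fin n → ℝ) → ℝ} (hm : IsMarg m) :
    {v ∈ Set.Icc (0:ℝ) 1 | ∀ w ∈ Set.Icc (0:ℝ) 1, aFun m w ≤ aFun m v} =
      Set.Icc (FcdfMinus m (1/2)) (Fcdf m (1/2)) := by
  have hαβ : FcdfMinus m (1/2) ≤ Fcdf m (1/2) := alpha_le_beta
  have hα0 : (0:ℝ) ≤ FcdfMinus m (1/2) := FcdfMinus_nonneg
  have hβ1 : Fcdf m (1/2) ≤ 1 := Fcdf_le_one
  have hβmem : Fcdf m (1/2) ∈ Icc (0:ℝ) 1 := ⟨Fcdf_nonneg, hβ1⟩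
  have hconst : ∀ v ∈ Icc (FcdfMinus m (1/2)) (Fcdf m (1/2)), aFun m v = aFun m (Fcdf m (1/2)) := by
    intro v hv
    have hvI : v ∈ Icc (0:ℝ) 1 := ⟨hα0.trans hv.1, hv.2.trans hβ1⟩
    have hd := aFun_diff hm hvI hβmem
    rw [intervalIntegral.integral_of_le hv.2, key_const hm hv] at hd
    linarith
  ext v
  simp only [mem_setOf_eq, mem_Icc]
  constructor
  · rintro ⟨hvI, hmax⟩
    by_contra hc
    have hlt : aFun m v < aFun m (Fcdf m (1/2)) := by
      rcases lt_or_ge v (FcdfMinus m (1/2)) with h1 | h1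
      · exact key_left hm hvI h1
      · rcases lt_or_ge (Fcdf m (1/2)) v with h2 | h2
        · exact key_right hm hvI h2
        · exact absurd ⟨h1, h2⟩ hc
    exact absurd (hmax _ hβmem) (not_le.2 hlt)
  · intro hv
    have hvI : v ∈ Icc (0:ℝ) 1 := ⟨hα0.trans hv.1, hv.2.trans hβ1⟩
    refine ⟨hvI, fun w hw => ?_⟩
    rw [hconst v hv]
    rcases lt_or_ge w (FcdfMinus m (1/2)) with h1 | h1
    · exact (key_left hm hw h1).le
    · rcases le_or_gt w (Fcdf m (1/2)) with h2 | h2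
      · exact le_of_eq (hconst w ⟨h1, h2⟩)
      · exact (key_right hm hw h2).le
end
end

section
/- For any measurable m : Ω → [0,1], the interval of optimal volumes for Accuracy, V^A = [F_m(1/2-), F_m(1/2)], is contained in [max{2‖m‖₁ - 1, 0}, min{2‖m‖₁, 1}]. -/
open MeasureTheory Set

noncomputable section

theorem stmt6 {n : ℕ} {m : (Fin n → ℝ) → ℝ} (hm : IsMarg m) :
    Set.Icc (FcdfMinus m (1/2)) (Fcdf m (1/2)) ⊆
      Set.Icc (max (2 * vol m - 1) 0) (min (2 * vol m) 1) := by
  set μ := cubeMeasure n with hμdef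
  have hμ : μ univ = 1 := by
    rw [hμdef, cubeMeasure, Measure.restrict_apply_univ, volume_pi_pi]
    simp [Real.volume_Icc]
  haveI : IsProbabilityMeasure μ := ⟨hμ⟩
  have hint : Integrable m μ :=
    (integrable_const (1:ℝ)).mono' hm.1.aestronglyMeasurable
      (ae_of_all _ fun x => by
        rw [Real.norm_eq_abs, abs_of_nonneg (hm.2 x).1]; exact (hm.2 x).2)
  set B : Set (Fin n → ℝ) := {ω | 1 - m ω < 1/2} with hBdef
  set A : Set (Fin n → ℝ) := {ω | 1 - m ω ≤ 1/2} with hAdef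
  have hB : MeasurableSet B := measurableSet_lt (measurable_const.sub hm.1) measurable_const
  have hA : MeasurableSet A := measurableSet_le (measurable_const.sub hm.1) measurable_const
  -- upper bound: μ A ≤ 2 vol m
  have hupper : (μ A).toReal ≤ 2 * vol m := by
    have h1 : (1/2 : ℝ) * (μ A).toReal ≤ ∫ ω in A, m ω ∂μ := by
      have := setIntegral_const (μ := μ) (s := A) (1/2 : ℝ)
      rw [smul_eq_mul, mul_comm, measureReal_def] at this
      rw [← this]
      exact setIntegral_mono_on (integrableOn_const (measure_ne_top μ A))
        hint.integrableOn hA (fun x hx => by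
          have : 1 - m x ≤ 1/2 := hx
          linarith)
    have h2 : ∫ ω in A, m ω ∂μ ≤ vol m := by
      refine setIntegral_le_integral hint (ae_of_all _ fun x => (hm.2 x).1)
    have : (1/2 : ℝ) * (μ A).toReal ≤ vol m := h1.trans h2
    linarith
  -- lower bound: 2 vol m - 1 ≤ μ B
  have hsplit : (μ B).toReal + (μ Bᶜ).toReal = 1 := by
    rw [← ENNReal.toReal_add (measure_ne_top μ B) (measure_ne_top μ Bᶜ),
      measure_add_measure_compl hB, hμ, ENNReal.toReal_one]
  have hlower : 2 * vol m - 1 ≤ (μ B).toReal := by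
    have h1 : ∫ ω in B, m ω ∂μ ≤ (μ B).toReal := by
      have := setIntegral_const (μ := μ) (s := B) (1 : ℝ)
      rw [smul_eq_mul, mul_one, measureReal_def] at this
      rw [← this]
      exact setIntegral_mono_on hint.integrableOn
        (integrableOn_const (measure_ne_top μ B))
        hB (fun x _ => (hm.2 x).2)
    have h2 : ∫ ω in Bᶜ, m ω ∂μ ≤ (1/2) * (μ Bᶜ).toReal := by
      have := setIntegral_const (μ := μ) (s := Bᶜ) (1/2 : ℝ)
      rw [smul_eq_mul, mul_comm, measureReal_def] at this
      rw [← this]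
      exact setIntegral_mono_on hint.integrableOn
        (integrableOn_const (measure_ne_top μ Bᶜ))
        hB.compl (fun x hx => by
          have : ¬ (1 - m x < 1/2) := hx
          push_neg at this; linarith)
    have h3 : vol m = ∫ ω in B, m ω ∂μ + ∫ ω in Bᶜ, m ω ∂μ := by
      rw [vol, ← hμdef, (integral_add_compl hB hint)]
    linarith
  intro v hv
  have hvB : (μ B).toReal ≤ v := hv.1
  have hvA : v ≤ (μ A).toReal := hv.2
  have hA1 : (μ A).toReal ≤ 1 := by
    have h := prob_le_one (μ := μ) (s := A)
    simpa using ENNReal.toReal_mono ENNReal.one_ne_top h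
  have hB0 : (0:ℝ) ≤ (μ B).toReal := ENNReal.toReal_nonneg
  constructor
  · exact le_trans (max_le (hlower.trans hvB) (hB0.trans hvB)) le_rfl
  · exact le_min (hvA.trans hupper) (hvA.trans hA1)
end
end

section
/- For every v ∈ [0,1] there exists a measurable m : Ω → [0,1] with ‖m‖₁ = v such that F_m(1/2-) = max{2v - 1, 0} and F_m(1/2) = min{2v, 1}; i.e., the volume bounds for optimal Accuracy segmentations are sharp. -/
open MeasureTheory Set

noncomputable section

instance cubeFinite (n : ℕ) : IsFiniteMeasure (cubeMeasure n) := by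
  constructor
  rw [cubeMeasure, Measure.restrict_apply_univ]
  exact (isCompact_univ_pi fun _ => isCompact_Icc).measure_lt_top

lemma cube_meas_lt {n : ℕ} (i0 : Fin n) (c : ℝ) :
    cubeMeasure n {ω | ω i0 < c} = ENNReal.ofReal (max (min c 1) 0) := by
  have hcube : MeasurableSet (Set.univ.pi fun _ : Fin n => Set.Icc (0:ℝ) 1) :=
    MeasurableSet.univ_pi fun _ => measurableSet_Icc
  rw [cubeMeasure, Measure.restrict_apply' hcube]
  have hset : {ω : Fin n → ℝ | ω i0 < c} ∩ (Set.univ.pi fun _ => Set.Icc (0:ℝ) 1)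
      = Set.univ.pi fun i => if i = i0 then Set.Icc (0:ℝ) 1 ∩ Set.Iio c else Set.Icc (0:ℝ) 1 := by
    ext ω
    simp only [Set.mem_inter_iff, Set.mem_setOf_eq, Set.mem_pi, Set.mem_univ, true_implies]
    constructor
    · rintro ⟨h1, h2⟩ i
      have := h2 i
      simp only [Set.mem_Icc] at this
      by_cases hi : i = i0 <;> simp [hi, h1] <;> [skip; exact this] <;> subst hi <;> exact this
    · intro h
      have h0 := h i0
      simp at h0
      refine ⟨h0.2, fun i => ?_⟩
      have hi := h i
      by_cases hii : i = i0
      · subst hii; simpa using h0.1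
      · simpa [hii] using hi
  rw [hset, volume_pi_pi]
  have hv : ∀ i : Fin n, volume (if i = i0 then Set.Icc (0:ℝ) 1 ∩ Set.Iio c else Set.Icc (0:ℝ) 1)
      = if i = i0 then volume (Set.Icc (0:ℝ) 1 ∩ Set.Iio c) else 1 := by
    intro i; split_ifs <;> simp [Real.volume_Icc]
  simp only [hv]
  rw [Finset.prod_ite_eq' Finset.univ i0 (fun _ => volume (Set.Icc (0:ℝ) 1 ∩ Set.Iio c))]
  simp only [Finset.mem_univ, if_true]
  rcases le_or_gt c 0 with h0 | h0
  · have : Set.Icc (0:ℝ) 1 ∩ Set.Iio c = ∅ := by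
      ext x; simp only [Set.mem_inter_iff, Set.mem_Icc, Set.mem_Iio, Set.mem_empty_iff_false, iff_false]
      rintro ⟨⟨hx0, _⟩, hxc⟩; linarith
    rw [this]
    simp [max_eq_right (min_le_of_left_le h0)]
  · rcases le_or_gt c 1 with h1 | h1
    · have : Set.Icc (0:ℝ) 1 ∩ Set.Iio c = Set.Ico 0 c := by
        ext x; simp only [Set.mem_inter_iff, Set.mem_Icc, Set.mem_Iio, Set.mem_Ico]
        constructor
        · rintro ⟨⟨hx0, _⟩, hxc⟩; exact ⟨hx0, hxc⟩
        · rintro ⟨hx0, hxc⟩; exact ⟨⟨hx0, by linarith⟩, hxc⟩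
      rw [this, Real.volume_Ico]
      rw [min_eq_left h1, max_eq_left h0.le]
      norm_num
    · have : Set.Icc (0:ℝ) 1 ∩ Set.Iio c = Set.Icc 0 1 := by
        ext x; simp only [Set.mem_inter_iff, Set.mem_Icc, Set.mem_Iio, and_iff_left_iff_imp]
        rintro ⟨_, hx1⟩; linarith
      rw [this, Real.volume_Icc]
      rw [min_eq_right h1.le]
      norm_num

theorem stmt7 {n : ℕ} (hn : 1 ≤ n) :
    ∀ v ∈ Set.Icc (0:ℝ) 1, ∃ m : (Fin n → ℝ) → ℝ,
      IsMarg m ∧ vol m = v ∧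
      FcdfMinus m (1/2) = max (2 * v - 1) 0 ∧
      Fcdf m (1/2) = min (2 * v) 1 := by
  intro v hv
  obtain ⟨hv0, hv1⟩ := hv
  set i0 : Fin n := ⟨0, hn⟩ with hi0
  set A : Set (Fin n → ℝ) := {ω | ω i0 < 2*v - 1} with hA
  set B : Set (Fin n → ℝ) := {ω | ω i0 < 2*v} with hB
  have hAm : MeasurableSet A := measurableSet_lt (measurable_pi_apply i0) measurable_const
  have hBm : MeasurableSet B := measurableSet_lt (measurable_pi_apply i0) measurable_const
  have hAB : A ⊆ B := fun ω h => by simp only [hA, hB, Set.mem_setOf_eq] at *; linarith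
  refine ⟨fun ω => A.indicator (fun _ => (1:ℝ)/2) ω + B.indicator (fun _ => (1:ℝ)/2) ω, ?_, ?_, ?_, ?_⟩
  · constructor
    · exact ((measurable_const.indicator hAm).add (measurable_const.indicator hBm))
    · intro ω
      by_cases h1 : ω ∈ A <;> by_cases h2 : ω ∈ B <;>
        simp [Set.indicator, h1, h2] <;> norm_num
  · -- vol
    have hμA : cubeMeasure n A = ENNReal.ofReal (max (min (2*v-1) 1) 0) := cube_meas_lt i0 _
    have hμB : cubeMeasure n B = ENNReal.ofReal (max (min (2*v) 1) 0) := cube_meas_lt i0 _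
    have hiA : Integrable (A.indicator (fun _ => (1:ℝ)/2)) (cubeMeasure n) :=
      (integrable_indicator_iff hAm).2 (integrableOn_const (measure_ne_top _ _))
    have hiB : Integrable (B.indicator (fun _ => (1:ℝ)/2)) (cubeMeasure n) :=
      (integrable_indicator_iff hBm).2 (integrableOn_const (measure_ne_top _ _))
    rw [vol, integral_add hiA hiB, integral_indicator_const _ hAm, integral_indicator_const _ hBm,
      measureReal_def, measureReal_def, hμA, hμB, ENNReal.toReal_ofReal (le_max_right _ _), ENNReal.toReal_ofReal (le_max_right _ _)]
    rcases le_or_gt v (1/2) with h | h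
    · rw [max_eq_right (by rw [min_le_iff]; left; linarith),
        max_eq_left (le_min (by linarith) (by linarith)),
        min_eq_left (by linarith)]
      simp; ring
    · rw [max_eq_left (le_min (by linarith) (by linarith)),
        min_eq_left (by linarith), min_eq_right (by linarith),
        max_eq_left (by linarith)]
      simp; ring
  · -- FcdfMinus
    have hset : {ω : Fin n → ℝ | 1 - (A.indicator (fun _ => (1:ℝ)/2) ω + B.indicator (fun _ => (1:ℝ)/2) ω) < 1/2} = A := by
      ext ω
      by_cases h1 : ω ∈ A <;> by_cases h2 : ω ∈ B <;>
        simp [Set.indicator, h1, h2] <;> norm_num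
      exact absurd (hAB h1) h2
    rw [FcdfMinus, hset, cube_meas_lt i0, ENNReal.toReal_ofReal (le_max_right _ _),
      min_eq_left (by linarith)]
  · -- Fcdf
    have hset : {ω : Fin n → ℝ | 1 - (A.indicator (fun _ => (1:ℝ)/2) ω + B.indicator (fun _ => (1:ℝ)/2) ω) ≤ 1/2} = B := by
      ext ω
      by_cases h1 : ω ∈ A <;> by_cases h2 : ω ∈ B <;>
        simp [Set.indicator, h1, h2] <;> norm_num
      exact absurd (hAB h1) h2
    rw [Fcdf, hset, cube_meas_lt i0, ENNReal.toReal_ofReal (le_max_right _ _),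
      max_eq_left (le_min (by linarith) (by linarith))]
end
end
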